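/- Let A be the real Jordan algebra with basis {a, b} and multiplication a² = a, b² = b, ab = 0, and let V be the real Jordan algebra with basis {u, v} and multiplication u² = u, v² = 0, uv = 0. Let ▷ : V × A → A be the zero map and let ◁ : V × A → V be the bilinear map with u ◁ a = u ◁ b = 0, v ◁ a = v ◁ b = (1/2)v; then (A, V, ◁, ▷) is a matched pair of Jordan algebras, and a linear map r : V → A is a deformation map of this matched pair if and only if it belongs to one of the following six families (for some α ∈ ℝ): (i) r(u) = 0, r(v) = αb; (ii) r(u) = 0, r(v) = αa; (iii) r(u) = a + b, r(v) = αb; (iv) r(u) = a + b, r(v) = αa; (v) r(u) = a, r(v) = 0; (vi) r(u) = b, r(v) = 0. -/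

import Mathlib

/-- A bilinear multiplication `m` on `A` makes `A` a Jordan algebra:
it is commutative and satisfies the Jordan identity `(a² b) a = a² (b a)`. -/
def IsJordanAlg {k A : Type*} [Field k] [AddCommGroup A] [Module k A]
    (m : A →ₗ[k] A →ₗ[k] A) : Prop :=
  (∀ a b, m a b = m b a) ∧ ∀ a b, m (m (m a a) b) a = m (m a a) (m b a)

/-- A (possibly set-relativized) bilinear-to-function version of the matched pair
conditions for Jordan algebras: `l = ◁ : V × A → V` is a right action,
`p = ▷ : V × A → A` is a left action, and the compatibilities (MP1)-(MP6) hold,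
for all elements of `SA ⊆ A`, `SV ⊆ V`. -/
def MPConds (k : Type*) {A V : Type*} [Field k] [AddCommGroup A] [Module k A]
    [AddCommGroup V] [Module k V]
    (mA : A → A → A) (mV : V → V → V)
    (l : V → A → V) (p : V → A → A) (SA : Set A) (SV : Set V) : Prop :=
  -- ◁ is a right action of A on V : (x ◁ a²) ◁ a = (x ◁ a) ◁ a²
  (∀ x ∈ SV, ∀ a ∈ SA, l (l x (mA a a)) a = l (l x a) (mA a a)) ∧
  -- ▷ is a left action of V on A : x ▷ (x² ▷ a) = x² ▷ (x ▷ a)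
  (∀ x ∈ SV, ∀ a ∈ SA, p x (p (mV x x) a) = p (mV x x) (p x a)) ∧
  -- (MP1)
  (∀ a ∈ SA, ∀ x ∈ SV,
      mA a (p x (mA a a)) + p (l x (mA a a)) a
        = mA (mA a a) (p x a) + p (l x a) (mA a a)) ∧
  -- (MP2)
  (∀ a ∈ SA, ∀ x ∈ SV,
      l x (p (mV x x) a) + mV (l (mV x x) a) x
        = l (mV x x) (p x a) + mV (mV x x) (l x a)) ∧
  -- (MP3)
  (∀ a ∈ SA, ∀ b ∈ SA, ∀ x ∈ SV,
      (2 : k) • (l (l (l x a) b) a + l x (mA (p x a) b) + l x (p (l x a) b)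
          + mV (l (l x a) b) x)
        + l (l (mV x x) b) a + l x (mA b (mA a a))
      = (2 : k) • (l (l x a) (mA b a) + l (l x a) (p x b) + l (l x b) (p x a)
          + mV (l x a) (l x b))
        + l (mV x x) (mA b a) + l (l x b) (mA a a)) ∧
  -- (MP4)
  (∀ a ∈ SA, ∀ x ∈ SV, ∀ y ∈ SV,
      (2 : k) • (p y (p x a) + p x (p y (p x a)) + p (l y (p x a)) a
          + p (mV (l x a) y) a)
        + p (mV (mV x x) y) a + p x (p y (mA a a))
      = (2 : k) • (mA (p y a) (p x a) + p (mV x y) (p x a) + p (l y a) (p x a)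
          + p (l x a) (p y a))
        + p (mV x x) (p y a) + p (mV x y) (mA a a)) ∧
  -- (MP5)
  (∀ a ∈ SA, ∀ x ∈ SV, ∀ y ∈ SV,
      (2 : k) • (l (l y (p x a)) a + l (mV (l x a) y) a + l x (p y (p x a))
          + mV (l y (p x a)) x + mV (mV (l x a) y) x)
        + l (mV (mV x x) y) a + l x (p y (mA a a)) + mV (l y (mA a a)) x
      = (2 : k) • (l (l x a) (p y a) + l (l y a) (p x a) + l (mV x y) (p x a)
          + mV (l x a) (mV x y) + mV (l x a) (l y a))
        + l (mV x x) (p y a) + l (mV x y) (mA a a) + mV (mV x x) (l y a)) ∧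
  -- (MP6)
  (∀ a ∈ SA, ∀ b ∈ SA, ∀ x ∈ SV,
      (2 : k) • (mA (mA (p x a) b) a + mA (p (l x a) b) a + p (l (l x a) b) a
          + p x (mA (p x a) b) + p x (p (l x a) b))
        + mA (p (mV x x) b) a + p (l (mV x x) b) a + p x (mA (mA a a) b)
      = (2 : k) • (mA (p x a) (mA a b) + p (l x a) (mA b a) + mA (p x a) (p x b)
          + p (l x b) (p x a) + p (l x a) (p x b))
        + p (mV x x) (mA b a) + p (l x b) (mA a a) + mA (mA a a) (p x b))

/-- `(A, V, ◁, ▷)` is a matched pair of Jordan algebras (bundled bilinear maps). -/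
def IsMPair {k A V : Type*} [Field k] [AddCommGroup A] [Module k A]
    [AddCommGroup V] [Module k V]
    (mA : A →ₗ[k] A →ₗ[k] A) (mV : V →ₗ[k] V →ₗ[k] V)
    (l : V →ₗ[k] A →ₗ[k] V) (p : V →ₗ[k] A →ₗ[k] A) : Prop :=
  MPConds k (fun a b => mA a b) (fun x y => mV x y) (fun x a => l x a) (fun x a => p x a)
    Set.univ Set.univ

/-- The bicrossed product multiplication on `A × V`:
`(a, x) ∘ (b, y) = (ab + x▷b + y▷a, x◁b + y◁a + xy)`. -/
def bimulJ {k A V : Type*} [Field k] [AddCommGroup A] [Module k A]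
    [AddCommGroup V] [Module k V]
    (mA : A →ₗ[k] A →ₗ[k] A) (mV : V →ₗ[k] V →ₗ[k] V)
    (l : V →ₗ[k] A →ₗ[k] V) (p : V →ₗ[k] A →ₗ[k] A) :
    A × V → A × V → A × V :=
  fun z w =>
    (mA z.1 w.1 + p z.2 w.1 + p w.2 z.1, l z.2 w.1 + l w.2 z.1 + mV z.2 w.2)

/-- The left semidirect product multiplication on `A × V`:
`(a, x) ∘ (b, y) = (ab + x▷b + y▷a, xy)`. -/
def lsemimulJ {k A V : Type*} [Field k] [AddCommGroup A] [Module k A]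
    [AddCommGroup V] [Module k V]
    (mA : A →ₗ[k] A →ₗ[k] A) (mV : V →ₗ[k] V →ₗ[k] V)
    (p : V →ₗ[k] A →ₗ[k] A) : A × V → A × V → A × V :=
  fun z w => (mA z.1 w.1 + p z.2 w.1 + p w.2 z.1, mV z.2 w.2)

/-- The right semidirect product multiplication on `A × V`:
`(a, x) ∘ (b, y) = (ab, x◁b + y◁a + xy)`. -/
def rsemimulJ {k A V : Type*} [Field k] [AddCommGroup A] [Module k A]
    [AddCommGroup V] [Module k V]
    (mA : A →ₗ[k] A →ₗ[k] A) (mV : V →ₗ[k] V →ₗ[k] V)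
    (l : V →ₗ[k] A →ₗ[k] V) : A × V → A × V → A × V :=
  fun z w => (mA z.1 w.1, l z.2 w.1 + l w.2 z.1 + mV z.2 w.2)

/-- `m : A × A → A` is a Jordan algebra multiplication: it is bilinear,
commutative and satisfies the Jordan identity. -/
def IsJordanMulFun (k : Type*) {A : Type*} [Field k] [AddCommGroup A] [Module k A]
    (m : A → A → A) : Prop :=
  (∀ z z' w, m (z + z') w = m z w + m z' w) ∧
  (∀ (c : k) (z w), m (c • z) w = c • m z w) ∧
  (∀ z w w', m z (w + w') = m z w + m z w') ∧
  (∀ (c : k) (z w), m z (c • w) = c • m z w) ∧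
  (∀ z w, m z w = m w z) ∧
  (∀ z w, m (m (m z z) w) z = m (m z z) (m w z))

/-- `r : B → A` is a deformation map of the matched pair `(A, B, ◁, ▷)`:
`r(xy) − r(x)r(y) = x▷r(y) + y▷r(x) − r(x◁r(y) + y◁r(x))`. -/
def IsDefMapB {k A B : Type*} [Field k] [AddCommGroup A] [Module k A]
    [AddCommGroup B] [Module k B]
    (mA : A →ₗ[k] A →ₗ[k] A) (mB : B →ₗ[k] B →ₗ[k] B)
    (l : B →ₗ[k] A →ₗ[k] B) (p : B →ₗ[k] A →ₗ[k] A) (r : B →ₗ[k] A) : Prop :=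
  ∀ x y, r (mB x y) - mA (r x) (r y)
    = p x (r y) + p y (r x) - r (l x (r y) + l y (r x))

/-- Equivalence of deformation maps: `r ∼ s` iff there is a `k`-linear
automorphism `σ` of `B` with
`σ(xy) − σ(x)σ(y) = σ(x)◁s(σ(y)) − σ(x◁r(y)) + σ(y)◁s(σ(x)) − σ(y◁r(x))`. -/
def DefEquivJ {k A B : Type*} [Field k] [AddCommGroup A] [Module k A]
    [AddCommGroup B] [Module k B]
    (mB : B →ₗ[k] B →ₗ[k] B) (l : B →ₗ[k] A →ₗ[k] B) (r s : B →ₗ[k] A) : Prop :=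
  ∃ σ : B →ₗ[k] B, Function.Bijective σ ∧ ∀ x y,
    σ (mB x y) - mB (σ x) (σ y)
      = l (σ x) (s (σ y)) - σ (l x (r y)) + l (σ y) (s (σ x)) - σ (l y (r x))

/-- for the real Jordan algebras `A = ⟨a, b | a² = a, b² = b,
ab = 0⟩` and `V = ⟨u, v | u² = u, v² = 0, uv = 0⟩` (realized on `ℝ × ℝ` with
`a = u = (1,0)`, `b = v = (0,1)`), the trivial `▷` and the action
`v ◁ a = v ◁ b = (1/2)v`, `u ◁ a = u ◁ b = 0` form a matched pair, and the
deformation maps of this matched pair are exactly the six listed families. -/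
theorem statement18
    (mA : (ℝ × ℝ) →ₗ[ℝ] (ℝ × ℝ) →ₗ[ℝ] (ℝ × ℝ))
    (hmA : ∀ z w : ℝ × ℝ, mA z w = (z.1 * w.1, z.2 * w.2))
    (mV : (ℝ × ℝ) →ₗ[ℝ] (ℝ × ℝ) →ₗ[ℝ] (ℝ × ℝ))
    (hmV : ∀ z w : ℝ × ℝ, mV z w = (z.1 * w.1, 0))
    (l : (ℝ × ℝ) →ₗ[ℝ] (ℝ × ℝ) →ₗ[ℝ] (ℝ × ℝ))
    (hl : ∀ x c : ℝ × ℝ, l x c = (0, (1 / 2 : ℝ) * x.2 * (c.1 + c.2)))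
    (p : (ℝ × ℝ) →ₗ[ℝ] (ℝ × ℝ) →ₗ[ℝ] (ℝ × ℝ))
    (hp : ∀ x c : ℝ × ℝ, p x c = 0) :
    -- (A, V, ◁, ▷) is a matched pair of Jordan algebras
    IsMPair mA mV l p ∧
    -- classification of the deformation maps (u = (1,0), v = (0,1), a = (1,0), b = (0,1))
    (∀ r : (ℝ × ℝ) →ₗ[ℝ] (ℝ × ℝ),
      IsDefMapB mA mV l p r ↔
        ((∃ α : ℝ, r (1, 0) = 0 ∧ r (0, 1) = (0, α)) ∨
         (∃ α : ℝ, r (1, 0) = 0 ∧ r (0, 1) = (α, 0)) ∨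
         (∃ α : ℝ, r (1, 0) = (1, 1) ∧ r (0, 1) = (0, α)) ∨
         (∃ α : ℝ, r (1, 0) = (1, 1) ∧ r (0, 1) = (α, 0)) ∨
         (r (1, 0) = (1, 0) ∧ r (0, 1) = 0) ∨
         (r (1, 0) = (0, 1) ∧ r (0, 1) = 0))) := by
  have hrlin : ∀ (r : (ℝ × ℝ) →ₗ[ℝ] (ℝ × ℝ)) (z : ℝ × ℝ),
      r z = z.1 • r (1, 0) + z.2 • r (0, 1) := by
    intro r z
    have hz : z = z.1 • ((1:ℝ), (0:ℝ)) + z.2 • ((0:ℝ), (1:ℝ)) := by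
      simp [Prod.ext_iff]
    conv_lhs => rw [hz]
    rw [map_add, map_smul, map_smul]
  constructor
  · refine ⟨?_, ?_, ?_, ?_, ?_, ?_, ?_, ?_⟩ <;>
      (intros x hx a ha; try intros y hy) <;>
      simp only [hmA, hmV, hl, hp, Prod.smul_def, Prod.mk_add_mk, smul_eq_mul,
        Prod.fst_zero, Prod.snd_zero, Prod.mk.injEq, zero_add, add_zero,
        mul_zero, zero_mul] <;>
      constructor <;> first | trivial | ring
  · intro r
    set P := r (1, 0) with hP
    set Q := r (0, 1) with hQ
    have hr0 : ∀ c : ℝ, r (0, c) = c • Q := by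
      intro c
      rw [show ((0:ℝ), c) = c • ((0:ℝ), (1:ℝ)) by simp, map_smul, hQ]
    have key : IsDefMapB mA mV l p r ↔
        (P.1 * P.1 = P.1 ∧ P.2 * P.2 = P.2 ∧ Q.1 * Q.2 = 0 ∧
          (P.1 - P.2) * Q.1 = 0 ∧ (P.2 - P.1) * Q.2 = 0) := by
      constructor
      · intro h
        have h1 := h (1, 0) (1, 0)
        have h2 := h (0, 1) (0, 1)
        have h3 := h (1, 0) (0, 1)
        simp only [hmA, hmV, hl, hp, ← hP, ← hQ, Prod.mk_add_mk] at h1 h2 h3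
        norm_num at h1 h2 h3
        simp only [← hP, Prod.mk_zero_zero, map_zero, hr0] at h1 h2 h3
        simp only [Prod.smul_def, smul_eq_mul, Prod.ext_iff, Prod.fst_sub,
          Prod.snd_sub, Prod.fst_zero, Prod.snd_zero, Prod.fst_neg,
          Prod.snd_neg] at h1 h2 h3
        refine ⟨by nlinarith [h1.1], by nlinarith [h1.2], by nlinarith [h2.1],
          by nlinarith [h3.1], by nlinarith [h3.2]⟩
      · rintro ⟨e1, e2, e3, e4, e5⟩ x y
        rw [hrlin r (mV x y), hrlin r (l x (r y) + l y (r x)),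
            hrlin r x, hrlin r y]
        simp only [hmA, hmV, hl, hp, ← hP, ← hQ, Prod.smul_def, smul_eq_mul,
          Prod.mk_add_mk, Prod.fst_add, Prod.snd_add, Prod.ext_iff,
          Prod.fst_sub, Prod.snd_sub, Prod.fst_zero, Prod.snd_zero]
        constructor
        · linear_combination (-(x.1*y.1))*e1 - (x.1*y.2+x.2*y.1)/2*e4
            + x.2*y.2*e3
        · linear_combination (-(x.1*y.1))*e2 - (x.1*y.2+x.2*y.1)/2*e5
            + x.2*y.2*e3
    rw [key]
    constructor
    · rintro ⟨e1, e2, e3, e4, e5⟩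
      have hp1 : P.1 = 0 ∨ P.1 = 1 := by
        rcases mul_eq_zero.mp (show P.1 * (P.1 - 1) = 0 by linear_combination e1)
          with h | h
        · exact Or.inl h
        · exact Or.inr (by linarith)
      have hp2 : P.2 = 0 ∨ P.2 = 1 := by
        rcases mul_eq_zero.mp (show P.2 * (P.2 - 1) = 0 by linear_combination e2)
          with h | h
        · exact Or.inl h
        · exact Or.inr (by linarith)
      rcases hp1 with h1 | h1 <;> rcases hp2 with h2 | h2
      · rcases mul_eq_zero.mp e3 with hq | hq
        · exact Or.inl ⟨Q.2, by simp [Prod.ext_iff, h1, h2],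
            by simp [Prod.ext_iff, hq]⟩
        · exact Or.inr (Or.inl ⟨Q.1, by simp [Prod.ext_iff, h1, h2],
            by simp [Prod.ext_iff, hq]⟩)
      · have hq1 : Q.1 = 0 := by
          have h := e4; rw [h1, h2] at h; linarith
        have hq2 : Q.2 = 0 := by
          have h := e5; rw [h1, h2] at h; linarith
        exact Or.inr (Or.inr (Or.inr (Or.inr (Or.inr
          ⟨by simp [Prod.ext_iff, h1, h2], by simp [Prod.ext_iff, hq1, hq2]⟩))))
      · have hq1 : Q.1 = 0 := by
          have h := e4; rw [h1, h2] at h; linarith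
        have hq2 : Q.2 = 0 := by
          have h := e5; rw [h1, h2] at h; linarith
        exact Or.inr (Or.inr (Or.inr (Or.inr (Or.inl
          ⟨by simp [Prod.ext_iff, h1, h2], by simp [Prod.ext_iff, hq1, hq2]⟩))))
      · rcases mul_eq_zero.mp e3 with hq | hq
        · exact Or.inr (Or.inr (Or.inl ⟨Q.2,
            by simp [Prod.ext_iff, h1, h2], by simp [Prod.ext_iff, hq]⟩))
        · exact Or.inr (Or.inr (Or.inr (Or.inl ⟨Q.1,
            by simp [Prod.ext_iff, h1, h2], by simp [Prod.ext_iff, hq]⟩)))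
    · rintro (⟨α, h1, h2⟩ | ⟨α, h1, h2⟩ | ⟨α, h1, h2⟩ | ⟨α, h1, h2⟩ |
        ⟨h1, h2⟩ | ⟨h1, h2⟩) <;> rw [h1, h2] <;> norm_num
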